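/- Let A ∈ ℝ^{m×n}, b ∈ ℝᵐ, and suppose x_k = Q_k y_k where Q_{k+1} ∈ ℝ^{n×(k+1)} has orthonormal columns contained in a subspace N, A Q_k = P_{k+1} B_k with P_{k+1} ∈ ℝ^{m×(k+1)} having orthonormal columns and P_{k+1} e₁ δ₁ = b, P_N Aᵀ P_{k+1} = Q_k B_kᵀ + γ_{k+1} q_{k+1} e_{k+1}ᵀ, and y_k minimizes ‖B_k y − δ₁e₁‖₂. If γ_{k+1} δ_{k+1} = 0 (termination), then P_N Aᵀ(A x_k − b) = 0, i.e., x_k satisfies the normal equations of the least squares problem min_{x∈N} ‖Ax − b‖₂. -/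

import Mathlib

open Matrix

/-- Termination of the null-space-restricted Golub–Kahan bidiagonalization: under the
matrix-form relations, if `γ_{k+1} δ_{k+1} = 0` and `y_k` minimizes `‖B_k y − δ₁e₁‖`, then
`x_k = Q_k y_k` satisfies the normal equations `P_N Aᵀ(A x_k − b) = 0` of
`min_{x ∈ N} ‖Ax − b‖`. -/
theorem nsr_gkb_termination (m n k : ℕ) (A : Matrix (Fin m) (Fin n) ℝ)
    (N : Submodule ℝ (EuclideanSpace ℝ (Fin n)))
    (Qk : Matrix (Fin n) (Fin (k + 1)) ℝ) (Pk : Matrix (Fin m) (Fin (k + 2)) ℝ)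
    (Bk : Matrix (Fin (k + 2)) (Fin (k + 1)) ℝ)
    (b : EuclideanSpace ℝ (Fin m)) (q : EuclideanSpace ℝ (Fin n))
    (yk : EuclideanSpace ℝ (Fin (k + 1))) (xk : EuclideanSpace ℝ (Fin n))
    (δ1 γlast δlast : ℝ)
    (hQorth : Qkᵀ * Qk = 1)
    (hQN : ∀ j : Fin (k + 1),
      Matrix.toEuclideanLin Qk (EuclideanSpace.single j (1 : ℝ)) ∈ N)
    (hPorth : Pkᵀ * Pk = 1)
    (hb : Matrix.toEuclideanLin Pk (EuclideanSpace.single (0 : Fin (k + 2)) δ1) = b)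
    (hAQ : A * Qk = Pk * Bk)
    (hadj : ∀ u : EuclideanSpace ℝ (Fin (k + 2)),
      (↑(Submodule.orthogonalProjection N
            (Matrix.toEuclideanLin Aᵀ (Matrix.toEuclideanLin Pk u))) :
          EuclideanSpace ℝ (Fin n)) =
        Matrix.toEuclideanLin Qk (Matrix.toEuclideanLin Bkᵀ u) +
          (γlast * u (Fin.last (k + 1))) • q)
    (hqN : q ∈ N)
    (hBlast : ∀ j : Fin (k + 1),
      Bk (Fin.last (k + 1)) j = if j = Fin.last k then δlast else 0)
    (hterm : γlast * δlast = 0)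
    (hyk : ∀ y : EuclideanSpace ℝ (Fin (k + 1)),
      ‖Matrix.toEuclideanLin Bk yk - EuclideanSpace.single (0 : Fin (k + 2)) δ1‖ ≤
        ‖Matrix.toEuclideanLin Bk y - EuclideanSpace.single (0 : Fin (k + 2)) δ1‖)
    (hxk : xk = Matrix.toEuclideanLin Qk yk) :
    (↑(Submodule.orthogonalProjection N
          (Matrix.toEuclideanLin Aᵀ (Matrix.toEuclideanLin A xk - b))) :
        EuclideanSpace ℝ (Fin n)) = 0 := by
  set c : EuclideanSpace ℝ (Fin (k + 2)) := EuclideanSpace.single (0 : Fin (k + 2)) δ1 with hc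
  set r : EuclideanSpace ℝ (Fin (k + 2)) := Matrix.toEuclideanLin Bk yk - c with hr
  -- Step 1: A xk - b = Pk r
  have hstep1 : Matrix.toEuclideanLin A xk - b = Matrix.toEuclideanLin Pk r := by
    rw [hr, map_sub, hb, hxk]
    congr 1
    have h1 : Matrix.toEuclideanLin A (Matrix.toEuclideanLin Qk yk) =
        Matrix.toEuclideanLin (A * Qk) yk := by
      simp [Matrix.toEuclideanLin_apply, Matrix.mulVec_mulVec]
    have h2 : Matrix.toEuclideanLin Pk (Matrix.toEuclideanLin Bk yk) =
        Matrix.toEuclideanLin (Pk * Bk) yk := by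
      simp [Matrix.toEuclideanLin_apply, Matrix.mulVec_mulVec]
    rw [h1, h2, hAQ]
  -- Step 2: minimality implies r ⟂ range Bk
  have key : ∀ z : EuclideanSpace ℝ (Fin (k + 1)),
      inner ℝ r (Matrix.toEuclideanLin Bk z) = (0 : ℝ) := by
    intro z
    set v := Matrix.toEuclideanLin Bk z with hv
    have h : ∀ t : ℝ, 0 ≤ ‖v‖ ^ 2 * (t * t) + (2 * inner ℝ r v) * t + 0 := by
      intro t
      have h1 := hyk (yk + t • z)
      have h2 : Matrix.toEuclideanLin Bk (yk + t • z) - c = r + t • v := by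
        rw [map_add, LinearMap.map_smul, hr, hv]
        abel
      rw [h2] at h1
      have h3 : ‖r‖ ^ 2 ≤ ‖r + t • v‖ ^ 2 :=
        pow_le_pow_left₀ (norm_nonneg _) h1 2
      have h4 : ‖r + t • v‖ ^ 2 = ‖r‖ ^ 2 + 2 * (t * inner ℝ r v) + t ^ 2 * ‖v‖ ^ 2 := by
        rw [@norm_add_sq_real, real_inner_smul_right, norm_smul, mul_pow,
          Real.norm_eq_abs, sq_abs]
        try ring
      rw [h4] at h3
      nlinarith [h3]
    have hd := discrim_le_zero h
    rw [discrim] at hd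
    have ha2 : (inner ℝ r v : ℝ) ^ 2 = 0 := by nlinarith [sq_nonneg (inner ℝ r v : ℝ)]
    exact sq_eq_zero_iff.mp ha2
  -- Step 3: Bkᵀ r = 0
  have hBtr : Matrix.toEuclideanLin Bkᵀ r = 0 := by
    have hconj : Bkᵀ = Bkᴴ := by
      ext i j
      simp [Matrix.conjTranspose_apply]
    rw [hconj, Matrix.toEuclideanLin_conjTranspose_eq_adjoint]
    have h0 : (inner ℝ (LinearMap.adjoint (Matrix.toEuclideanLin Bk) r)
        (LinearMap.adjoint (Matrix.toEuclideanLin Bk) r) : ℝ) = 0 := by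
      rw [LinearMap.adjoint_inner_left]
      exact key _
    exact inner_self_eq_zero.mp h0
  -- Step 4: last component of r
  have hrlast : r (Fin.last (k + 1)) = δlast * yk (Fin.last k) := by
    have hlast_ne : (Fin.last (k + 1) : Fin (k + 2)) ≠ 0 := by
      simp [Fin.ext_iff, Fin.last]
    have hc0 : c (Fin.last (k + 1)) = 0 := by
      rw [hc]
      simp [EuclideanSpace.single_apply, hlast_ne]
    have hB : (Matrix.toEuclideanLin Bk yk) (Fin.last (k + 1)) = δlast * yk (Fin.last k) := by
      have hrfl : (Matrix.toEuclideanLin Bk yk) (Fin.last (k + 1)) =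
          (Bk *ᵥ (WithLp.equiv 2 _ yk)) (Fin.last (k + 1)) := rfl
      rw [hrfl]
      simp only [Matrix.mulVec, dotProduct, hBlast, ite_mul, zero_mul]
      rw [Finset.sum_ite_eq' Finset.univ (Fin.last k)]
      simp only [Finset.mem_univ, if_true]
      rfl
    have hsub : r (Fin.last (k + 1)) = (Matrix.toEuclideanLin Bk yk) (Fin.last (k + 1)) -
        c (Fin.last (k + 1)) := rfl
    rw [hsub, hB, hc0, sub_zero]
  -- Conclude
  rw [hstep1, hadj r, hBtr, map_zero, hrlast, zero_add]
  rw [show γlast * (δlast * yk (Fin.last k)) = (γlast * δlast) * yk (Fin.last k) by ring,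
    hterm, zero_mul, zero_smul]
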